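/- arXiv:1708.06295 — 2 statements merged into one kernel-verified Lean document; each statement's English description precedes it below -/
import Mathlib

section
/- Let M be a jstit model for Ag, let m, m1 ∈ Tree with m ⊲ m1, let h ∈ H_{m1}, and let t1, …, tn ∈ Pol with {t1, …, tn} ⊆ Act(m, h). Put S = {m'' ∈ Tree : {t1, …, tn} ⊆ Act_{m''}}. Then S ∈ Θ_{m'} for every m' ∈ Tree with m ⊲ m' ⊴ m1. -/
/-! Preliminaries: temporal frames, stit frames, jstit frames, the language of
JA-STIT, jstit models, satisfaction, and the Hilbert system Σ_D(CS). -/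

/-- A temporal frame: a nonempty set of moments with a partial order satisfying
historical connection and no backward branching. -/
structure TemporalFrame (Mo : Type) : Type where
  le : Mo → Mo → Prop
  le_refl : ∀ m, le m m
  le_antisymm : ∀ {m m'}, le m m' → le m' m → m = m'
  le_trans : ∀ {m1 m2 m3}, le m1 m2 → le m2 m3 → le m1 m3
  nonempty : Nonempty Mo
  hist_conn : ∀ m m1, ∃ m2, le m2 m ∧ le m2 m1
  no_backward : ∀ m m1 m2, le m1 m → le m2 m → le m1 m2 ∨ le m2 m1

namespace TemporalFrame

variable {Mo : Type} (T : TemporalFrame Mo)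

/-- The strict companion of the temporal order. -/
def lt (m m' : Mo) : Prop := T.le m m' ∧ m ≠ m'

/-- A history is a maximal chain of moments w.r.t. the temporal order. -/
def IsHistory (h : Set Mo) : Prop :=
  IsChain T.le h ∧ ∀ h' : Set Mo, IsChain T.le h' → h ⊆ h' → h' = h

/-- `T.H m` is the set of histories passing through the moment `m`. -/
def H (m : Mo) : Set (Set Mo) := { h | T.IsHistory h ∧ m ∈ h }

/-- Histories `h` and `g` are undivided at `m`. -/
def Undiv (m : Mo) (h g : Set Mo) : Prop := ∃ m', T.lt m m' ∧ m' ∈ h ∧ m' ∈ g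

/-- `m'` is an immediate successor of `m`. -/
def Next (m m' : Mo) : Prop := T.lt m m' ∧ ∀ m'', T.lt m'' m' → T.le m'' m

/-- Mixed successor condition on (the temporal part of) a frame. -/
def MixSucc : Prop :=
  ∀ m m1 : Mo,
    (T.lt m m1 → ∃ m2, T.le m2 m1 ∧ T.Next m m2) ∨
    (∀ h ∈ T.H m, ∀ g ∈ T.H m, T.Undiv m h g)

end TemporalFrame

/-- A stit frame for an agent community `Ag`: a temporal frame together with a choice
function assigning to each moment and agent a partition of the histories through that
moment, subject to no choice between undivided histories and independence of agents. -/
structure StitFrame (Mo : Type) (Ag : Type) extends TemporalFrame Mo where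
  choice : Mo → Ag → Set (Set (Set Mo))
  choice_cell_nonempty : ∀ m j C, C ∈ choice m j → C.Nonempty
  choice_cell_sub : ∀ m j C, C ∈ choice m j → C ⊆ toTemporalFrame.H m
  choice_cover : ∀ m j h, h ∈ toTemporalFrame.H m → ∃ C ∈ choice m j, h ∈ C
  choice_disjoint : ∀ m j C C', C ∈ choice m j → C' ∈ choice m j →
    (C ∩ C').Nonempty → C = C'
  no_choice_undiv : ∀ m j h h', h ∈ toTemporalFrame.H m → h' ∈ toTemporalFrame.H m →
    toTemporalFrame.Undiv m h h' → ∀ C ∈ choice m j, h ∈ C → h' ∈ C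
  independence : ∀ m (f : Ag → Set (Set Mo)), (∀ j, f j ∈ choice m j) →
    (⋂ j, f j).Nonempty

/-- A justification stit (jstit) frame for `Ag`: a stit frame together with two
epistemic preorders `R ⊆ R_e`, with the temporal order included in `R`. -/
structure JstitFrame (Mo : Type) (Ag : Type) extends StitFrame Mo Ag where
  R : Mo → Mo → Prop
  Re : Mo → Mo → Prop
  R_refl : ∀ m, R m m
  R_trans : ∀ {m1 m2 m3}, R m1 m2 → R m2 m3 → R m1 m3
  Re_refl : ∀ m, Re m m
  Re_trans : ∀ {m1 m2 m3}, Re m1 m2 → Re m2 m3 → Re m1 m3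
  R_sub_Re : ∀ {m m'}, R m m' → Re m m'
  le_sub_R : ∀ {m m'}, le m m' → R m m'

namespace JstitFrame

variable {Mo : Type} {Ag : Type} (F : JstitFrame Mo Ag)

/-- The family `Θ_m` of subsets of the set of moments associated with a moment `m`. -/
def Theta (m : Mo) : Set (Set Mo) :=
  { S | m ∈ S ∧
    (∀ m1 m2, m1 ∈ S → F.Re m1 m2 → m2 ∈ S) ∧
    (∀ m1, (∀ h ∈ F.toTemporalFrame.H m1,
        ∃ m2 ∈ h, F.toTemporalFrame.Next m1 m2 ∧ m2 ∈ S) → m1 ∈ S) ∧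
    (∀ m1, m1 ∈ S →
      (∀ m2, F.toTemporalFrame.lt m2 m1 →
        ∃ m3, F.toTemporalFrame.lt m2 m3 ∧ F.toTemporalFrame.lt m3 m1) →
      ∃ m4, F.toTemporalFrame.lt m4 m1 ∧ m4 ∈ S) }

/-- A jstit frame is unirelational iff `R_e ⊆ R`. -/
def Unirelational : Prop := ∀ m m', F.Re m m' → F.R m m'

/-- Regularity of a jstit frame. -/
def Regular : Prop :=
  ∀ m m1 : Mo, F.toTemporalFrame.lt m m1 →
    (∃ S : Set Mo,
      (∀ m0, F.toTemporalFrame.lt m m0 → F.le m0 m1 → S ∈ F.Theta m0) ∧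
      m ∉ S ∧
      ∃ h' ∈ F.toTemporalFrame.H m,
        (∀ g ∈ F.toTemporalFrame.H m1, ¬ F.toTemporalFrame.Undiv m h' g) ∧
        (∀ m' ∈ h', F.toTemporalFrame.Next m m' → m' ∉ S)) →
    ∃ m2, F.le m2 m1 ∧ F.toTemporalFrame.Next m m2

end JstitFrame

/-- Proof polynomials over proof variables `PVar` and proof constants `PConst`. -/
inductive Pol (PVar PConst : Type) : Type
  | var : PVar → Pol PVar PConst
  | const : PConst → Pol PVar PConst
  | plus : Pol PVar PConst → Pol PVar PConst → Pol PVar PConst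
  | times : Pol PVar PConst → Pol PVar PConst → Pol PVar PConst
  | bang : Pol PVar PConst → Pol PVar PConst

/-- Formulas of JA-STIT. -/
inductive Form (Ag PVar PConst PropVar : Type) : Type
  | pv : PropVar → Form Ag PVar PConst PropVar
  | and : Form Ag PVar PConst PropVar → Form Ag PVar PConst PropVar →
      Form Ag PVar PConst PropVar
  | neg : Form Ag PVar PConst PropVar → Form Ag PVar PConst PropVar
  | stit : Ag → Form Ag PVar PConst PropVar → Form Ag PVar PConst PropVar
  | box : Form Ag PVar PConst PropVar → Form Ag PVar PConst PropVar
  | proves : Pol PVar PConst → Form Ag PVar PConst PropVar → Form Ag PVar PConst PropVar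
  | know : Form Ag PVar PConst PropVar → Form Ag PVar PConst PropVar
  | ann : Pol PVar PConst → Form Ag PVar PConst PropVar

namespace Form

variable {Ag PVar PConst PropVar : Type}

/-- Implication, defined as usual from `¬` and `∧`. -/
def imp (A B : Form Ag PVar PConst PropVar) : Form Ag PVar PConst PropVar :=
  neg (and A (neg B))

/-- Disjunction, defined as usual. -/
def or (A B : Form Ag PVar PConst PropVar) : Form Ag PVar PConst PropVar :=
  neg (and (neg A) (neg B))

/-- The dual `◇` of the historical necessity modality. -/
def dia (A : Form Ag PVar PConst PropVar) : Form Ag PVar PConst PropVar :=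
  neg (box (neg A))

/-- Falsum, defined as usual. -/
def bot [Inhabited PropVar] : Form Ag PVar PConst PropVar :=
  and (pv default) (neg (pv default))

end Form

/-- Conjunction of a nonempty list of formulas (head plus tail). -/
def andList {Ag PVar PConst PropVar : Type} :
    Form Ag PVar PConst PropVar → List (Form Ag PVar PConst PropVar) →
      Form Ag PVar PConst PropVar
  | A, [] => A
  | A, B :: L => Form.and A (andList B L)

/-- Disjunction of a list of formulas. -/
def bigOr {Ag PVar PConst PropVar : Type} [Inhabited PropVar] :
    List (Form Ag PVar PConst PropVar) → Form Ag PVar PConst PropVar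
  | [] => Form.bot
  | [A] => A
  | A :: B :: L => Form.or A (bigOr (B :: L))

/-- A classical propositional tautology: a formula true under every Boolean valuation
commuting with `∧` and `¬` (all other formulas being treated as atoms). -/
def Tautology {Ag PVar PConst PropVar : Type} (A : Form Ag PVar PConst PropVar) : Prop :=
  ∀ v : Form Ag PVar PConst PropVar → Bool,
    (∀ B C, v (Form.and B C) = (v B && v C)) →
    (∀ B, v (Form.neg B) = !v B) →
    v A = true

/-- The axiom schemes (A0)–(A9) of Σ_D. -/
inductive Ax {Ag PVar PConst PropVar : Type} : Form Ag PVar PConst PropVar → Prop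
  -- (A0) classical propositional tautologies
  | a0 {A} : Tautology A → Ax A
  -- (A1) S5 axioms for □
  | boxK {A B} : Ax (Form.imp (Form.box (Form.imp A B))
      (Form.imp (Form.box A) (Form.box B)))
  | boxT {A} : Ax (Form.imp (Form.box A) A)
  | box4 {A} : Ax (Form.imp (Form.box A) (Form.box (Form.box A)))
  | box5 {A} : Ax (Form.imp (Form.neg (Form.box A)) (Form.box (Form.neg (Form.box A))))
  -- (A1) S5 axioms for each [j]
  | stitK {j : Ag} {A B} : Ax (Form.imp (Form.stit j (Form.imp A B))
      (Form.imp (Form.stit j A) (Form.stit j B)))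
  | stitT {j : Ag} {A} : Ax (Form.imp (Form.stit j A) A)
  | stit4 {j : Ag} {A} : Ax (Form.imp (Form.stit j A) (Form.stit j (Form.stit j A)))
  | stit5 {j : Ag} {A} : Ax (Form.imp (Form.neg (Form.stit j A))
      (Form.stit j (Form.neg (Form.stit j A))))
  -- (A2)
  | a2 {j : Ag} {A} : Ax (Form.imp (Form.box A) (Form.stit j A))
  -- (A3), for pairwise distinct agents
  | a3 {p : Ag × Form Ag PVar PConst PropVar} {L : List (Ag × Form Ag PVar PConst PropVar)} :
      (((p :: L).map Prod.fst).Nodup) →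
      Ax (Form.imp
        (andList (Form.dia (Form.stit p.1 p.2)) (L.map fun q => Form.dia (Form.stit q.1 q.2)))
        (Form.dia (andList (Form.stit p.1 p.2) (L.map fun q => Form.stit q.1 q.2))))
  -- (A4)
  | a4 {s t : Pol PVar PConst} {A B} : Ax (Form.imp (Form.proves s (Form.imp A B))
      (Form.imp (Form.proves t A) (Form.proves (Pol.times s t) B)))
  -- (A5)
  | a5 {t : Pol PVar PConst} {A} : Ax (Form.imp (Form.proves t A)
      (Form.and (Form.proves (Pol.bang t) (Form.proves t A)) (Form.know A)))
  -- (A6)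
  | a6 {s t : Pol PVar PConst} {A} : Ax (Form.imp
      (Form.or (Form.proves s A) (Form.proves t A)) (Form.proves (Pol.plus s t) A))
  -- (A7) S4 axioms for K
  | knowK {A B} : Ax (Form.imp (Form.know (Form.imp A B))
      (Form.imp (Form.know A) (Form.know B)))
  | knowT {A} : Ax (Form.imp (Form.know A) A)
  | know4 {A} : Ax (Form.imp (Form.know A) (Form.know (Form.know A)))
  -- (A8)
  | a8 {A} : Ax (Form.imp (Form.know A) (Form.box (Form.know (Form.box A))))
  -- (A9)
  | a9 {t : Pol PVar PConst} : Ax (Form.imp (Form.box (Form.ann t))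
      (Form.know (Form.box (Form.ann t))))

/-- Iterated prefixes `c_n : … : c_1 : A` of instances `A` of the axiom schemes. -/
inductive ConstIter {Ag PVar PConst PropVar : Type} : Form Ag PVar PConst PropVar → Prop
  | base {c : PConst} {A} : Ax A → ConstIter (Form.proves (Pol.const c) A)
  | step {c : PConst} {B} : ConstIter B → ConstIter (Form.proves (Pol.const c) B)

/-- A constant specification: a set of formulas of the form `c_n : … : c_1 : A` with `A`
an instance of (A0)–(A9), closed under deleting the outermost constant. -/
def IsConstSpec {Ag PVar PConst PropVar : Type}
    (CS : Set (Form Ag PVar PConst PropVar)) : Prop :=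
  (∀ B ∈ CS, ConstIter B) ∧
  ∀ (c c' : PConst) (B : Form Ag PVar PConst PropVar),
    Form.proves (Pol.const c) (Form.proves (Pol.const c') B) ∈ CS →
    Form.proves (Pol.const c') B ∈ CS

/-- Provability in Σ_D(CS): axioms (A0)–(A9), modus ponens (R1), K-necessitation (R2),
the rule (R_D) and the rule (R_CS). -/
inductive Proves {Ag PVar PConst PropVar : Type} [Inhabited PropVar]
    (CS : Set (Form Ag PVar PConst PropVar)) : Form Ag PVar PConst PropVar → Prop
  | ax {A} : Ax A → Proves CS A
  | mp {A B} : Proves CS (Form.imp A B) → Proves CS A → Proves CS B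
  | nec {A} : Proves CS A → Proves CS (Form.know A)
  | rd {A : Form Ag PVar PConst PropVar} {ts ss : List (Pol PVar PConst)}
      (hne : ts ++ ss ≠ []) :
      Proves CS (Form.imp (Form.know A)
        (bigOr ((ts.map fun t => Form.neg (Form.box (Form.ann t))) ++
                (ss.map fun s => Form.box (Form.ann s))))) →
      Proves CS (Form.imp (Form.know A)
        (bigOr ((ts.map fun t => Form.neg (Form.ann t)) ++
                (ss.map fun s => Form.ann s))))
  | rcs {B} : B ∈ CS → Proves CS B

/-- Γ is consistent in Σ_D(CS): no finite nonempty conjunction of members of Γ provably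
implies falsum. -/
def CSConsistent {Ag PVar PConst PropVar : Type} [Inhabited PropVar]
    (CS Γ : Set (Form Ag PVar PConst PropVar)) : Prop :=
  ¬ ∃ (A : Form Ag PVar PConst PropVar) (L : List (Form Ag PVar PConst PropVar)),
      A ∈ Γ ∧ (∀ B ∈ L, B ∈ Γ) ∧ Proves CS (Form.imp (andList A L) Form.bot)

/-- A jstit model for `Ag`: a jstit frame together with `Act`, an admissible evidence
function `E` and an evaluation `V`, subject to the semantical constraints. -/
structure JstitModel (Mo : Type) (Ag PVar PConst PropVar : Type)
    extends JstitFrame Mo Ag where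
  act : Mo → Set Mo → Set (Pol PVar PConst)
  ev : Mo → Pol PVar PConst → Set (Form Ag PVar PConst PropVar)
  val : PropVar → Set (Mo × Set Mo)
  -- monotonicity of evidence
  ev_mono : ∀ m m' t, Re m m' → ev m t ⊆ ev m' t
  -- evidence closure properties
  ev_app : ∀ m s t A B, Form.imp A B ∈ ev m s → A ∈ ev m t → B ∈ ev m (Pol.times s t)
  ev_sum_left : ∀ m s t, ev m s ⊆ ev m (Pol.plus s t)
  ev_sum_right : ∀ m s t, ev m t ⊆ ev m (Pol.plus s t)
  ev_bang : ∀ m t A, A ∈ ev m t → Form.proves t A ∈ ev m (Pol.bang t)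
  -- expansion of presented proofs
  expansion : ∀ m m' h, toTemporalFrame.lt m' m → h ∈ toTemporalFrame.H m →
    act m' h ⊆ act m h
  -- no new proofs guaranteed
  no_new : ∀ m t, (∀ h ∈ toTemporalFrame.H m, t ∈ act m h) →
    ∃ m' h, toTemporalFrame.lt m' m ∧ h ∈ toTemporalFrame.H m ∧ t ∈ act m' h
  -- presenting a new proof makes histories divide
  divide : ∀ m h h', h ∈ toTemporalFrame.H m → h' ∈ toTemporalFrame.H m →
    toTemporalFrame.Undiv m h h' → act m h = act m h'
  -- presented proofs are epistemically transparent
  transparent : ∀ m m' t, Re m m' → (∀ h ∈ toTemporalFrame.H m, t ∈ act m h) →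
    ∀ h' ∈ toTemporalFrame.H m', t ∈ act m' h'

namespace JstitModel

variable {Mo Ag PVar PConst PropVar : Type}

/-- `Act_m`, the set of proofs presented at `m` under every history through `m`. -/
def ActM (M : JstitModel Mo Ag PVar PConst PropVar) (m : Mo) : Set (Pol PVar PConst) :=
  { t | ∀ h ∈ M.toTemporalFrame.H m, t ∈ M.act m h }

/-- The satisfaction relation for jstit models. -/
def Sat (M : JstitModel Mo Ag PVar PConst PropVar) :
    Form Ag PVar PConst PropVar → Mo → Set Mo → Prop
  | Form.pv p, m, h => (m, h) ∈ M.val p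
  | Form.and A B, m, h => M.Sat A m h ∧ M.Sat B m h
  | Form.neg A, m, h => ¬ M.Sat A m h
  | Form.stit j A, m, h => ∀ h' C, C ∈ M.choice m j → h ∈ C → h' ∈ C → M.Sat A m h'
  | Form.box A, m, _ => ∀ h' ∈ M.toTemporalFrame.H m, M.Sat A m h'
  | Form.know A, m, _ => ∀ m' h', M.R m m' → h' ∈ M.toTemporalFrame.H m' → M.Sat A m' h'
  | Form.proves t A, m, _ => A ∈ M.ev m t ∧
      ∀ m' h', M.Re m m' → h' ∈ M.toTemporalFrame.H m' → M.Sat A m' h'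
  | Form.ann t, m, h => t ∈ M.act m h

/-- Validity of a formula in a jstit model. -/
def Valid (M : JstitModel Mo Ag PVar PConst PropVar)
    (A : Form Ag PVar PConst PropVar) : Prop :=
  ∀ m h, h ∈ M.toTemporalFrame.H m → M.Sat A m h

end JstitModel

/-- CS-normality of a jstit model. -/
def CSNormal {Mo Ag PVar PConst PropVar : Type}
    (CS : Set (Form Ag PVar PConst PropVar))
    (M : JstitModel Mo Ag PVar PConst PropVar) : Prop :=
  ∀ (c : PConst) (m : Mo) (A : Form Ag PVar PConst PropVar),
    Form.proves (Pol.const c) A ∈ CS → A ∈ M.ev m (Pol.const c)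

section Aux

variable {Mo : Type} {T : TemporalFrame Mo}

private lemma TF.lt_of_le_of_ne {a b : Mo} (h : T.le a b) (hne : a ≠ b) : T.lt a b :=
  ⟨h, hne⟩

private lemma TF.lt_of_lt_of_le {a b c : Mo} (h : T.lt a b) (h' : T.le b c) : T.lt a c := by
  refine ⟨T.le_trans h.1 h', ?_⟩
  rintro rfl
  exact h.2 (T.le_antisymm h.1 h')

/-- Every history through `x` contains every moment below `x`. -/
private lemma TF.pred_mem {h : Set Mo} (hh : T.IsHistory h) {x y : Mo}
    (hx : x ∈ h) (hy : T.le y x) : y ∈ h := by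
  have hchain : IsChain T.le (insert y h) := by
    intro a ha b hb hne
    rcases ha with rfl | ha
    · rcases hb with rfl | hb
      · exact absurd rfl hne
      · rcases eq_or_ne b x with rfl | hbx
        · exact Or.inl hy
        · rcases hh.1 hb hx hbx with h1 | h1
          · exact (T.no_backward x b a h1 hy).symm
          · exact Or.inl (T.le_trans hy h1)
    · rcases hb with rfl | hb
      · rcases eq_or_ne a x with rfl | hax
        · exact Or.inr hy
        · rcases hh.1 ha hx hax with h1 | h1
          · exact T.no_backward x a b h1 hy
          · exact Or.inr (T.le_trans hy h1)
      · exact hh.1 ha hb hne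
  have := hh.2 (insert y h) hchain (Set.subset_insert y h)
  exact this ▸ Set.mem_insert y h

variable {Ag PVar PConst PropVar : Type}

/-- Pushing a presented proof forward along a history. -/
private lemma JM.act_push (M : JstitModel Mo Ag PVar PConst PropVar)
    {ma mb m1 : Mo} (hab : M.toTemporalFrame.le ma mb)
    (hb : M.toTemporalFrame.le mb m1) {h : Set Mo}
    (hh : h ∈ M.toTemporalFrame.H m1) {t : Pol PVar PConst}
    (ht : t ∈ M.act ma h) : t ∈ M.act mb h := by
  rcases eq_or_ne ma mb with rfl | hne
  · exact ht
  · have hmb : mb ∈ h := TF.pred_mem hh.1 hh.2 hb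
    exact M.expansion mb ma h ⟨hab, hne⟩ ⟨hh.1, hmb⟩ ht

/-- If a proof is presented at `ms` along a history through a strictly later `m4`,
then it is presented at `m4` along every history through `m4`. -/
private lemma JM.act_all (M : JstitModel Mo Ag PVar PConst PropVar)
    {ms m4 : Mo} (h34 : M.toTemporalFrame.lt ms m4) {h : Set Mo}
    (hh : h ∈ M.toTemporalFrame.H ms) (h4h : m4 ∈ h) {t : Pol PVar PConst}
    (ht : t ∈ M.act ms h) : ∀ g ∈ M.toTemporalFrame.H m4, t ∈ M.act m4 g := by
  intro g hg
  have hmsg : ms ∈ g := TF.pred_mem hg.1 hg.2 h34.1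
  have hundiv : M.toTemporalFrame.Undiv ms h g := ⟨m4, h34, h4h, hg.2⟩
  have heq := M.divide ms h g hh ⟨hg.1, hmsg⟩ hundiv
  exact M.expansion m4 ms g h34 hg (heq ▸ ht)

/-- A common strictly earlier moment presenting all the proofs in a finite list. -/
private lemma JM.exists_common (M : JstitModel Mo Ag PVar PConst PropVar)
    (m1 : Mo) (ts : List (Pol PVar PConst)) (hne : ts ≠ [])
    (hts : ∀ t ∈ ts, ∃ mt ht, M.toTemporalFrame.lt mt m1 ∧
        ht ∈ M.toTemporalFrame.H m1 ∧ t ∈ M.act mt ht) :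
    ∃ ms, M.toTemporalFrame.lt ms m1 ∧
      ∀ t ∈ ts, ∃ h ∈ M.toTemporalFrame.H m1, t ∈ M.act ms h := by
  induction ts with
  | nil => exact absurd rfl hne
  | cons t rest ih =>
    obtain ⟨mt, ht, hmt, hht, hact⟩ := hts t List.mem_cons_self
    rcases eq_or_ne rest [] with rfl | hrest
    · refine ⟨mt, hmt, ?_⟩
      intro t' ht'
      rcases List.mem_singleton.mp ht' with rfl
      exact ⟨ht, hht, hact⟩
    · obtain ⟨ms, hms, hall⟩ := ih hrest (fun t' ht' => hts t' (List.mem_cons_of_mem t ht'))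
      rcases M.toTemporalFrame.no_backward m1 mt ms hmt.1 hms.1 with hle | hle
      · refine ⟨ms, hms, ?_⟩
        intro t' ht'
        rcases List.mem_cons.mp ht' with rfl | ht'
        · exact ⟨ht, hht, JM.act_push M hle hms.1 hht hact⟩
        · exact hall t' ht'
      · refine ⟨mt, hmt, ?_⟩
        intro t' ht'
        rcases List.mem_cons.mp ht' with rfl | ht'
        · exact ⟨ht, hht, hact⟩
        · obtain ⟨h', hh', hact'⟩ := hall t' ht'
          exact ⟨h', hh', JM.act_push M hle hmt.1 hh' hact'⟩

end Aux

/-- Claim 2 in Theorem 5: if `m ⊲ m1`, `h ∈ H_{m1}` and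
`t1,…,tn ∈ Act(m,h)`, then `S = {m'' : t1,…,tn ∈ Act_{m''}}` belongs to `Θ_{m'}`
for every `m'` with `m ⊲ m' ⊴ m1`. -/
theorem stmt18 {Mo Ag PVar PConst PropVar : Type} [Finite Ag]
    [Countable PVar] [Infinite PVar] [Countable PConst] [Infinite PConst]
    [Countable PropVar] [Infinite PropVar]
    (M : JstitModel Mo Ag PVar PConst PropVar)
    (m m1 : Mo) (h : Set Mo) (ts : List (Pol PVar PConst)) (hne : ts ≠ [])
    (hlt : M.toTemporalFrame.lt m m1) (hh : h ∈ M.toTemporalFrame.H m1)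
    (hts : ∀ t ∈ ts, t ∈ M.act m h) :
    ∀ m' : Mo, M.toTemporalFrame.lt m m' → M.le m' m1 →
      { m'' : Mo | ∀ t ∈ ts, t ∈ M.ActM m'' } ∈ M.toJstitFrame.Theta m' := by
  intro m' hmm' hm'm1
  have hmm1 : M.toTemporalFrame.le m m1 :=
    M.toTemporalFrame.le_trans hmm'.1 hm'm1
  have hmh : m ∈ h := TF.pred_mem hh.1 hh.2 hmm1
  have hm'h : m' ∈ h := TF.pred_mem hh.1 hh.2 hm'm1
  refine ⟨?_, ?_, ?_, ?_⟩
  · -- m' ∈ S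
    intro t htm g hg
    exact JM.act_all M hmm' ⟨hh.1, hmh⟩ hm'h (hts t htm) g hg
  · -- closure under R_e (epistemic transparency)
    intro ma mb hma hRe t htm
    exact M.transparent ma mb t hRe (hma t htm)
  · -- the Next condition
    intro ma hyp t htm g hg
    obtain ⟨m2, hm2g, hnext, hm2S⟩ := hyp g hg
    obtain ⟨m'', h'', hlt'', hh'', hact''⟩ := M.no_new m2 t (hm2S t htm)
    have hle'' : M.toTemporalFrame.le m'' ma := hnext.2 m'' hlt''
    have hta : t ∈ M.act ma h'' := JM.act_push M hle'' hnext.1.1 hh'' hact''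
    have hmah'' : ma ∈ h'' := TF.pred_mem hh''.1 hh''.2 hnext.1.1
    have hundiv : M.toTemporalFrame.Undiv ma h'' g := ⟨m2, hnext.1, hh''.2, hm2g⟩
    have heq := M.divide ma h'' g ⟨hh''.1, hmah''⟩ hg hundiv
    exact heq ▸ hta
  · -- the density condition
    intro ma hma hdense
    obtain ⟨ms, hms, hall⟩ := JM.exists_common M ma ts hne
      (fun t htm => M.no_new ma t (hma t htm))
    obtain ⟨m4, hsm4, hm4a⟩ := hdense ms hms
    refine ⟨m4, hm4a, ?_⟩
    intro t htm
    obtain ⟨h', hh', hact'⟩ := hall t htm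
    have hmsh' : ms ∈ h' := TF.pred_mem hh'.1 hh'.2 hms.1
    have hm4h' : m4 ∈ h' := TF.pred_mem hh'.1 hh'.2 hm4a.1
    exact JM.act_all M hsm4 ⟨hh'.1, hmsh'⟩ hm4h' hact'
end

section
/- Let M be a jstit model for Ag, let m ∈ Tree, let h' ∈ H_m, and let t ∈ Pol with t ∉ Act(m, h'). Then for every m' ∈ h' with Next(m, m'), we have t ∉ Act_{m'}. -/
/-- Claim 3 in Theorem 5: if `h' ∈ H_m` and `t ∉ Act(m,h')`, then for
every `m' ∈ h'` with `Next(m,m')` we have `t ∉ Act_{m'}`. -/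
theorem stmt19 {Mo Ag PVar PConst PropVar : Type} [Finite Ag]
    [Countable PVar] [Infinite PVar] [Countable PConst] [Infinite PConst]
    [Countable PropVar] [Infinite PropVar]
    (M : JstitModel Mo Ag PVar PConst PropVar)
    (m : Mo) (h' : Set Mo) (hh : h' ∈ M.toTemporalFrame.H m)
    (t : Pol PVar PConst) (ht : t ∉ M.act m h') :
    ∀ m' ∈ h', M.toTemporalFrame.Next m m' → t ∉ M.ActM m' := by
  -- auxiliary fact: any history through m' contains m when m ⊴ m'
  have mem_of_le : ∀ (g : Set Mo), M.toTemporalFrame.IsHistory g →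
      ∀ a b, b ∈ g → M.toTemporalFrame.le a b → a ∈ g := by
    intro g hg a b hb hab
    by_contra ha
    have hchain : IsChain M.toTemporalFrame.le (insert a g) := by
      refine hg.1.insert ?_
      intro x hx _
      have htot : M.toTemporalFrame.le b x ∨ M.toTemporalFrame.le x b := by
        by_cases hbxeq : b = x
        · exact Or.inl (hbxeq ▸ M.toTemporalFrame.le_refl b)
        · exact hg.1 hb hx hbxeq
      rcases htot with hbx | hxb
      · exact Or.inl (M.toTemporalFrame.le_trans hab hbx)
      · exact M.toTemporalFrame.no_backward b a x hab hxb
    have := hg.2 (insert a g) hchain (Set.subset_insert a g)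
    exact ha (this ▸ Set.mem_insert a g)
  intro m' hm'h' hnext htact
  -- from t ∈ ActM m', use no_new to get an earlier moment m'' and history g
  obtain ⟨m'', g, hltm'', hgH, htg⟩ := M.no_new m' t htact
  -- m'' ⊴ m by Next
  have hm''m : M.le m'' m := hnext.2 m'' hltm''
  -- g is a history through m' hence contains m (since m ⊴ m')
  have hmg : m ∈ g := mem_of_le g hgH.1 m m' hgH.2 hnext.1.1
  have hgHm : g ∈ M.toTemporalFrame.H m := ⟨hgH.1, hmg⟩
  -- t ∈ act m g
  have htmg : t ∈ M.act m g := by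
    by_cases heq : m'' = m
    · exact heq ▸ htg
    · exact M.expansion m m'' g ⟨hm''m, heq⟩ hgHm htg
  -- g and h' are undivided at m (witness m')
  have hundiv : M.toTemporalFrame.Undiv m g h' :=
    ⟨m', hnext.1, hgH.2, hm'h'⟩
  have := M.divide m g h' hgHm hh hundiv
  exact ht (this ▸ htmg)
end
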